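/- There is no holomorphic function f on ℂ∖{0} that is universal under conformal automorphisms: for every f ∈ 𝓗(ℂ∖{0}), the set {f ∘ φ : φ ∈ Aut(ℂ∖{0})} is not dense in 𝓗(ℂ∖{0}) with the compact-open topology. -/

import Mathlib

open Complex Set

noncomputable def gN (N : ℝ) (z : ℂ) : ℂ := Complex.exp (N * (z + z⁻¹))

def Kset : Set ℂ := {z : ℂ | ‖z‖ = 2⁻¹ ∨ ‖z‖ = 1 ∨ ‖z‖ = 2}

lemma gN_diff (N : ℝ) : DifferentiableOn ℂ (gN N) {z : ℂ | z ≠ 0} := by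
  intro z hz
  apply DifferentiableAt.differentiableWithinAt
  apply DifferentiableAt.cexp
  apply DifferentiableAt.const_mul
  exact differentiableAt_id.add (differentiableAt_inv hz)

lemma gN_le {N : ℝ} (hN : 0 ≤ N) {r : ℝ} (hr : 0 < r) {z : ℂ} (hz : ‖z‖ = r) :
    ‖gN N z‖ ≤ Real.exp (N * (r + r⁻¹)) := by
  have hre : ((N : ℂ) * (z + z⁻¹)).re ≤ N * (r + r⁻¹) := by
    have h1 : (z + z⁻¹).re ≤ r + r⁻¹ := by
      have h2 : z.re ≤ ‖z‖ := Complex.re_le_norm z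
      have h3 : (z⁻¹).re ≤ ‖z⁻¹‖ := Complex.re_le_norm _
      have h4 : ‖z⁻¹‖ = r⁻¹ := by rw [norm_inv, hz]
      simp only [Complex.add_re]
      rw [hz] at h2; rw [h4] at h3; linarith
    calc ((N : ℂ) * (z + z⁻¹)).re = N * (z + z⁻¹).re := by
          simp [Complex.mul_re, Complex.ofReal_re, Complex.ofReal_im]
      _ ≤ N * (r + r⁻¹) := by exact mul_le_mul_of_nonneg_left h1 hN
  calc ‖gN N z‖ = Real.exp ((((N : ℂ)) * (z + z⁻¹)).re) := by
        rw [gN, Complex.norm_exp]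
    _ ≤ Real.exp (N * (r + r⁻¹)) := Real.exp_le_exp.mpr hre

lemma gN_val (N : ℝ) (r : ℝ) (hr : 0 < r) :
    ‖gN N ((r : ℂ))‖ = Real.exp (N * (r + r⁻¹)) := by
  have h : (N : ℂ) * ((r : ℂ) + ((r : ℂ))⁻¹) = ((N * (r + r⁻¹) : ℝ) : ℂ) := by
    push_cast; ring
  rw [gN, h, Complex.norm_exp, Complex.ofReal_re]

/-- Maximum modulus principle on a closed annulus for a function holomorphic on ℂ∖{0}. -/
lemma annulus_max {f : ℂ → ℂ} (hf : DifferentiableOn ℂ f {z : ℂ | z ≠ 0})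
    {r₁ r₃ : ℝ} (h1 : 0 < r₁) {C : ℝ}
    (hb1 : ∀ w : ℂ, ‖w‖ = r₁ → ‖f w‖ ≤ C) (hb3 : ∀ w : ℂ, ‖w‖ = r₃ → ‖f w‖ ≤ C)
    {z : ℂ} (hz1 : r₁ ≤ ‖z‖) (hz3 : ‖z‖ ≤ r₃) : ‖f z‖ ≤ C := by
  rcases eq_or_lt_of_le hz1 with h | h
  · exact hb1 z h.symm
  rcases eq_or_lt_of_le hz3 with h' | h'
  · exact hb3 z h'
  set U : Set ℂ := {w : ℂ | r₁ < ‖w‖ ∧ ‖w‖ < r₃} with hU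
  have hUsub : U ⊆ {z : ℂ | z ≠ 0} := by
    intro w hw
    have : 0 < ‖w‖ := lt_trans h1 hw.1
    simpa using norm_pos_iff.mp this
  have hclsub : closure U ⊆ {w : ℂ | r₁ ≤ ‖w‖ ∧ ‖w‖ ≤ r₃} := by
    apply closure_minimal
    · intro w hw; exact ⟨le_of_lt hw.1, le_of_lt hw.2⟩
    · exact IsClosed.inter (isClosed_le continuous_const continuous_norm)
        (isClosed_le continuous_norm continuous_const)
  have hUopen : IsOpen U :=
    IsOpen.inter (isOpen_lt continuous_const continuous_norm)
      (isOpen_lt continuous_norm continuous_const)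
  have hbdd : Bornology.IsBounded U := by
    apply (Metric.isBounded_ball (x := (0:ℂ)) (r := r₃ + 1)).subset
    intro w hw
    simp only [Metric.mem_ball, Complex.dist_eq, sub_zero]
    calc ‖w‖ = ‖w‖ := rfl
      _ < r₃ + 1 := by linarith [hw.2]
  have hdc : DiffContOnCl ℂ f U := by
    constructor
    · exact hf.mono hUsub
    · apply hf.continuousOn.mono
      intro w hw
      have := hclsub hw
      have : 0 < ‖w‖ := lt_of_lt_of_le h1 this.1
      simpa using norm_pos_iff.mp this
  have hfr : ∀ w ∈ frontier U, ‖f w‖ ≤ C := by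
    intro w hw
    rw [hUopen.frontier_eq] at hw
    obtain ⟨hwc, hwn⟩ := hw
    have hb := hclsub hwc
    rcases eq_or_lt_of_le hb.1 with he | hlt
    · exact hb1 w he.symm
    rcases eq_or_lt_of_le hb.2 with he | hlt'
    · exact hb3 w he
    exact absurd ⟨hlt, hlt'⟩ hwn
  have hzc : z ∈ closure U := subset_closure ⟨h, h'⟩
  exact Complex.norm_le_of_forall_mem_frontier_norm_le hbdd hdc hfr hzc

lemma exp_gap {x y : ℝ} (hy : 0 ≤ y) (h : y + 2 ≤ x) : Real.exp y + 2 ≤ Real.exp x := by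
  have h1 : (1:ℝ) ≤ Real.exp y := Real.one_le_exp hy
  have h2 : (3:ℝ) ≤ Real.exp 2 := by
    have := Real.add_one_le_exp (2:ℝ); linarith
  have h3 : Real.exp y * Real.exp 2 ≤ Real.exp x := by
    rw [← Real.exp_add]; exact Real.exp_le_exp.mpr (by linarith)
  nlinarith

lemma exp_gap' {x y : ℝ} (hy : 0 ≤ y) (h : y + 3 ≤ x) : Real.exp y + 2 < Real.exp x := by
  have h1 : Real.exp y + 2 ≤ Real.exp (x - 1) := exp_gap hy (by linarith)
  have h2 : Real.exp (x - 1) < Real.exp x := Real.exp_lt_exp.mpr (by linarith)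
  linarith

lemma key {f : ℂ → ℂ} {N : ℝ} (hN : 0 ≤ N) {φ : ℂ → ℂ} {a : ℂ} (ha : a ≠ 0)
    (hφ : (∀ z : ℂ, z ≠ 0 → φ z = a * z) ∨ (∀ z : ℂ, z ≠ 0 → φ z = a / z))
    (happ : ∀ z ∈ Kset, ‖f (φ z) - gN N z‖ < 1)
    {r : ℝ} (hr : 0 < r) (hrK : ∀ z : ℂ, ‖z‖ = r → z ∈ Kset)
    (hrK' : ∀ z : ℂ, ‖z‖ = r⁻¹ → z ∈ Kset) :
    (∀ z : ℂ, ‖z‖ = r * ‖a‖ → ‖f z‖ ≤ Real.exp (N * (r + r⁻¹)) + 1) ∧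
      Real.exp (N * (r + r⁻¹)) - 1 ≤ ‖f ((r : ℂ) * a)‖ := by
  have ha' : ‖a‖ ≠ 0 := norm_ne_zero_iff.mpr ha
  have habs : ∀ w : ℂ, w ∈ Kset → ‖f (φ w) - gN N w‖ < 1 := by
    intro w hw
    have := happ w hw
    exact this
  constructor
  · intro z hz
    have hz0 : z ≠ 0 := by
      apply norm_ne_zero_iff.mp
      rw [hz]
      positivity
    rcases hφ with h | h
    · set w : ℂ := a⁻¹ * z with hw
      have hw0 : w ≠ 0 := mul_ne_zero (inv_ne_zero ha) hz0
      have haa : ‖a‖ ≠ 0 := ha'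
      have hwn : ‖w‖ = r := by
        rw [hw, norm_mul, norm_inv, hz]
        show (‖a‖)⁻¹ * (r * ‖a‖) = r
        field_simp
      have hK := hrK w hwn
      have h1 := habs w hK
      have hφw : φ w = z := by
        rw [h w hw0, hw]
        field_simp
      rw [hφw] at h1
      have h2 : ‖gN N w‖ ≤ Real.exp (N * (r + r⁻¹)) := gN_le hN hr hwn
      calc ‖f z‖ = ‖(f z - gN N w) + gN N w‖ := by ring_nf
        _ ≤ ‖f z - gN N w‖ + ‖gN N w‖ := norm_add_le _ _
        _ ≤ Real.exp (N * (r + r⁻¹)) + 1 := by linarith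
    · set w : ℂ := a / z with hw
      have hw0 : w ≠ 0 := div_ne_zero ha hz0
      have haa : ‖a‖ ≠ 0 := ha'
      have hwn : ‖w‖ = r⁻¹ := by
        rw [hw, norm_div, hz]
        show ‖a‖ / (r * ‖a‖) = r⁻¹
        rw [mul_comm]
        rw [div_mul_eq_div_div, div_self haa, one_div]
      have hK := hrK' w hwn
      have h1 := habs w hK
      have hφw : φ w = z := by
        rw [h w hw0, hw]
        field_simp
      rw [hφw] at h1
      have hrinv : 0 < r⁻¹ := by positivity
      have h2 : ‖gN N w‖ ≤ Real.exp (N * (r⁻¹ + (r⁻¹)⁻¹)) := gN_le hN hrinv hwn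
      rw [inv_inv] at h2
      have h2' : ‖gN N w‖ ≤ Real.exp (N * (r + r⁻¹)) := by
        rwa [add_comm r⁻¹ r] at h2
      calc ‖f z‖ = ‖(f z - gN N w) + gN N w‖ := by ring_nf
        _ ≤ ‖f z - gN N w‖ + ‖gN N w‖ := norm_add_le _ _
        _ ≤ Real.exp (N * (r + r⁻¹)) + 1 := by linarith
  · rcases hφ with h | h
    · set w : ℂ := (r : ℂ) with hw
      have hw0 : w ≠ 0 := by
        simp [hw, Complex.ofReal_ne_zero, ne_of_gt hr]
      have hwn : ‖w‖ = r := by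
        simp [hw, Complex.norm_real, abs_of_pos hr]
      have h1 := habs w (hrK w hwn)
      have hφw : φ w = (r : ℂ) * a := by rw [h w hw0, hw, mul_comm]
      rw [hφw] at h1
      have h2 : ‖gN N w‖ = Real.exp (N * (r + r⁻¹)) := gN_val N r hr
      have h3 := norm_sub_norm_le (gN N w) (f ((r:ℂ) * a))
      rw [norm_sub_rev] at h3
      linarith
    · set w : ℂ := ((r : ℂ))⁻¹ with hw
      have hw0 : w ≠ 0 := by
        simp [hw, Complex.ofReal_ne_zero, ne_of_gt hr]
      have hwn : ‖w‖ = r⁻¹ := by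
        simp [hw, Complex.norm_real, abs_of_pos hr]
      have h1 := habs w (hrK' w hwn)
      have hφw : φ w = (r : ℂ) * a := by
        rw [h w hw0, hw]
        field_simp
      rw [hφw] at h1
      have hrinv : 0 < r⁻¹ := by positivity
      have h2 : ‖gN N w‖ = Real.exp (N * (r + r⁻¹)) := by
        have := gN_val N r⁻¹ hrinv
        rw [inv_inv, add_comm r⁻¹ r] at this
        rw [Complex.ofReal_inv] at this
        rw [hw]
        exact this
      have h3 := norm_sub_norm_le (gN N w) (f ((r:ℂ) * a))
      rw [norm_sub_rev] at h3
      linarith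

/-- The conformal automorphisms of ℂ∖{0}: z ↦ az and z ↦ a/z for a ≠ 0. -/
def IsAutCStar (φ : ℂ → ℂ) : Prop :=
  ∃ a : ℂ, a ≠ 0 ∧ ((∀ z : ℂ, z ≠ 0 → φ z = a * z) ∨ (∀ z : ℂ, z ≠ 0 → φ z = a / z))

/-- There is no universal holomorphic function on ℂ∖{0}: for every holomorphic f on ℂ∖{0},
the set {f ∘ φ : φ ∈ Aut(ℂ∖{0})} is not dense in 𝓗(ℂ∖{0}) for the compact-open topology. -/
theorem no_universal_on_punctured_plane (f : ℂ → ℂ)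
    (hf : DifferentiableOn ℂ f {z : ℂ | z ≠ 0}) :
    ¬ (∀ g : ℂ → ℂ, DifferentiableOn ℂ g {z : ℂ | z ≠ 0} →
        ∀ K : Set ℂ, K ⊆ {z : ℂ | z ≠ 0} → IsCompact K → ∀ ε > (0:ℝ),
          ∃ φ : ℂ → ℂ, IsAutCStar φ ∧ ∀ z ∈ K, ‖f (φ z) - g z‖ < ε) := by
  intro H
  have hKsub : Kset ⊆ {z : ℂ | z ≠ 0} := by
    intro z hz
    rcases hz with h | h | h <;>
      (apply norm_ne_zero_iff.mp; rw [h]; norm_num)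
  have hKcomp : IsCompact Kset := by
    have hK : Kset = Metric.sphere (0:ℂ) 2⁻¹ ∪ (Metric.sphere (0:ℂ) 1 ∪ Metric.sphere (0:ℂ) 2) := by
      ext z
      simp [Kset, Metric.mem_sphere, Complex.dist_eq, sub_zero]
    rw [hK]
    exact (isCompact_sphere _ _).union ((isCompact_sphere _ _).union (isCompact_sphere _ _))
  have hK1 : ∀ z : ℂ, ‖z‖ = (2:ℝ)⁻¹ → z ∈ Kset := fun z h => Or.inl h
  have hK2 : ∀ z : ℂ, ‖z‖ = (1:ℝ) → z ∈ Kset := fun z h => Or.inr (Or.inl h)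
  have hK3 : ∀ z : ℂ, ‖z‖ = (2:ℝ) → z ∈ Kset := fun z h => Or.inr (Or.inr h)
  have hK1' : ∀ z : ℂ, ‖z‖ = ((2:ℝ)⁻¹)⁻¹ → z ∈ Kset := by
    intro z h; rw [inv_inv] at h; exact hK3 z h
  have hK2' : ∀ z : ℂ, ‖z‖ = ((1:ℝ))⁻¹ → z ∈ Kset := by
    intro z h; rw [inv_one] at h; exact hK2 z h
  have hK3' : ∀ z : ℂ, ‖z‖ = ((2:ℝ))⁻¹ → z ∈ Kset := fun z h => Or.inl h
  -- first application : g = exp (z + 1/z)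
  obtain ⟨φ₁, ⟨a₁, ha₁, hc₁⟩, hap₁⟩ := H (gN 1) (gN_diff 1) Kset hKsub hKcomp 1 one_pos
  -- second application : g = exp (8(z + 1/z))
  obtain ⟨φ₂, ⟨a₂, ha₂, hc₂⟩, hap₂⟩ := H (gN 8) (gN_diff 8) Kset hKsub hKcomp 1 one_pos
  set ρ := ‖a₁‖ with hρ
  set σ := ‖a₂‖ with hσ
  have hρ0 : 0 < ρ := norm_pos_iff.mpr ha₁
  have hσ0 : 0 < σ := norm_pos_iff.mpr ha₂
  -- facts from first application
  have k11 := key (f := f) (N := 1) zero_le_one ha₁ hc₁ hap₁ (r := 2⁻¹) (by norm_num) hK1 hK1'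
  have k12 := key (f := f) (N := 1) zero_le_one ha₁ hc₁ hap₁ (r := 1) one_pos hK2 hK2'
  have k13 := key (f := f) (N := 1) zero_le_one ha₁ hc₁ hap₁ (r := 2) two_pos hK3 hK3'
  have e1 : (1:ℝ) * (2⁻¹ + (2⁻¹)⁻¹) = 5/2 := by norm_num
  have e2 : (1:ℝ) * (1 + (1:ℝ)⁻¹) = 2 := by norm_num
  have e3 : (1:ℝ) * (2 + (2:ℝ)⁻¹) = 5/2 := by norm_num
  rw [e1] at k11; rw [e2] at k12; rw [e3] at k13
  -- facts from second application
  have k21 := key (f := f) (N := 8) (by norm_num) ha₂ hc₂ hap₂ (r := 2⁻¹) (by norm_num) hK1 hK1'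
  have k22 := key (f := f) (N := 8) (by norm_num) ha₂ hc₂ hap₂ (r := 1) one_pos hK2 hK2'
  have k23 := key (f := f) (N := 8) (by norm_num) ha₂ hc₂ hap₂ (r := 2) two_pos hK3 hK3'
  have e1' : (8:ℝ) * (2⁻¹ + (2⁻¹)⁻¹) = 20 := by norm_num
  have e2' : (8:ℝ) * (1 + (1:ℝ)⁻¹) = 16 := by norm_num
  have e3' : (8:ℝ) * (2 + (2:ℝ)⁻¹) = 20 := by norm_num
  rw [e1'] at k21; rw [e2'] at k22; rw [e3'] at k23
  -- Step A : ρ < 2 * σ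
  have hA : ρ < 2 * σ := by
    by_contra hcon
    push_neg at hcon
    have h2n : ‖(2:ℂ)‖ = 2 := by norm_num
    have hpt : ‖(2:ℂ) * a₂‖ = 2 * σ := by
      rw [norm_mul, h2n, ← hσ]
    have hub : ‖f ((2:ℂ) * a₂)‖ ≤ Real.exp 16 + 1 := by
      apply annulus_max hf hσ0 (r₃ := ρ) (C := Real.exp 16 + 1)
      · intro w hw
        apply k22.1 w
        rw [one_mul]; exact hw
      · intro w hw
        have := k12.1 w (by rw [one_mul]; exact hw)
        have hle : Real.exp 2 ≤ Real.exp 16 := Real.exp_le_exp.mpr (by norm_num)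
        linarith
      · rw [hpt]; linarith
      · rw [hpt]; exact hcon
    have hlb := k23.2
    have hc2 : ((2:ℝ) : ℂ) = (2:ℂ) := by norm_num
    rw [hc2] at hlb
    have hgap : Real.exp 16 + 2 < Real.exp 20 := exp_gap' (by norm_num) (by norm_num)
    linarith
  -- Step A' : σ < 2 * ρ
  have hA' : σ < 2 * ρ := by
    by_contra hcon
    push_neg at hcon
    have h2n : ‖((2:ℝ)⁻¹ : ℂ)‖ = 2⁻¹ := by norm_num
    have hpt : ‖((2:ℝ)⁻¹ : ℂ) * a₂‖ = 2⁻¹ * σ := by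
      rw [norm_mul, h2n, ← hσ]
    have hub : ‖f (((2:ℝ)⁻¹ : ℂ) * a₂)‖ ≤ Real.exp 16 + 1 := by
      apply annulus_max hf hρ0 (r₃ := σ) (C := Real.exp 16 + 1)
      · intro w hw
        have := k12.1 w (by rw [one_mul]; exact hw)
        have hle : Real.exp 2 ≤ Real.exp 16 := Real.exp_le_exp.mpr (by norm_num)
        linarith
      · intro w hw
        apply k22.1 w
        rw [one_mul]; exact hw
      · rw [hpt]; linarith
      · rw [hpt]; linarith
    have hlb := k21.2
    have hcast : (((2:ℝ)⁻¹ : ℝ) : ℂ) = ((2:ℝ)⁻¹ : ℂ) := by norm_num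
    rw [hcast] at hlb
    have hgap : Real.exp 16 + 2 < Real.exp 20 := exp_gap' (by norm_num) (by norm_num)
    linarith
  -- Step B : contradiction at a₂
  have hub : ‖f a₂‖ ≤ Real.exp (5/2) + 1 := by
    apply annulus_max hf (r₁ := 2⁻¹ * ρ) (r₃ := 2 * ρ) (by positivity) (C := Real.exp (5/2) + 1)
    · intro w hw; exact k11.1 w hw
    · intro w hw; exact k13.1 w hw
    · rw [← hσ]; linarith
    · rw [← hσ]; linarith
  have hlb := k22.2
  have hone : ((1:ℝ) : ℂ) * a₂ = a₂ := by norm_num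
  rw [hone] at hlb
  have hgap : Real.exp (5/2) + 2 < Real.exp 16 := exp_gap' (by norm_num) (by norm_num)
  linarith
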